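/- Let X be an integrable real random variable and ν > 0, and set μ̃(ν) = 2·E[X/(1 + X²/ν)] − E[X/(1 + 2X²/ν)]. Then the random variable X⁵(1 − 2X²/ν)/((1 + X²/ν)(1 + 2X²/ν)(1 + 4X²/ν)) is integrable, and 2μ̃(ν) − μ̃(ν/2) = E[X] + (4/ν²)·E[X⁵(1 − 2X²/ν)/((1 + X²/ν)(1 + 2X²/ν)(1 + 4X²/ν))]. -/

import Mathlib

open MeasureTheory

lemma frac_integrable {Ω : Type*} [MeasurableSpace Ω] (P : Measure Ω)
    {X : Ω → ℝ} (hX : Integrable X P) {ν : ℝ} (hν : 0 < ν) (k : ℝ) (hk : 0 ≤ k) :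
    Integrable (fun ω => X ω / (1 + k * (X ω) ^ 2 / ν)) P := by
  have hpos : ∀ x : ℝ, 0 < 1 + k * x ^ 2 / ν := fun x => by positivity
  have hmeas : AEStronglyMeasurable (fun ω => X ω / (1 + k * (X ω) ^ 2 / ν)) P := by
    have hc : Continuous (fun x : ℝ => x / (1 + k * x ^ 2 / ν)) :=
      Continuous.div continuous_id (by continuity) (fun x => (hpos x).ne')
    exact hc.comp_aestronglyMeasurable hX.1
  refine hX.mono hmeas (Filter.Eventually.of_forall fun ω => ?_)
  rw [norm_div, Real.norm_eq_abs, Real.norm_eq_abs]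
  rw [abs_of_pos (hpos (X ω))]
  have hle : 1 ≤ 1 + k * X ω ^ 2 / ν := by
    have : 0 ≤ k * X ω ^ 2 / ν := by positivity
    linarith
  calc |X ω| / (1 + k * X ω ^ 2 / ν) ≤ |X ω| := div_le_self (abs_nonneg _) hle
    _ = ‖X ω‖ := rfl

theorem repeated_richardson_identity {Ω : Type*} [MeasurableSpace Ω]
    (P : Measure Ω) [IsProbabilityMeasure P]
    {X : Ω → ℝ} (hX : Integrable X P) {ν : ℝ} (hν : 0 < ν) :
    Integrable (fun ω => (X ω) ^ 5 * (1 - 2 * (X ω) ^ 2 / ν) /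
      ((1 + (X ω) ^ 2 / ν) * (1 + 2 * (X ω) ^ 2 / ν) * (1 + 4 * (X ω) ^ 2 / ν))) P ∧
    2 * (2 * (∫ ω, X ω / (1 + (X ω) ^ 2 / ν) ∂P)
          - (∫ ω, X ω / (1 + 2 * (X ω) ^ 2 / ν) ∂P))
      - (2 * (∫ ω, X ω / (1 + 2 * (X ω) ^ 2 / ν) ∂P)
          - (∫ ω, X ω / (1 + 4 * (X ω) ^ 2 / ν) ∂P))
      = (∫ ω, X ω ∂P)
        + (4 / ν ^ 2) * ∫ ω, (X ω) ^ 5 * (1 - 2 * (X ω) ^ 2 / ν) /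
            ((1 + (X ω) ^ 2 / ν) * (1 + 2 * (X ω) ^ 2 / ν) * (1 + 4 * (X ω) ^ 2 / ν)) ∂P := by
  have h1 : Integrable (fun ω => X ω / (1 + (X ω) ^ 2 / ν)) P := by
    have := frac_integrable P hX hν 1 zero_le_one; simpa using this
  have h2 : Integrable (fun ω => X ω / (1 + 2 * (X ω) ^ 2 / ν)) P :=
    frac_integrable P hX hν 2 (by norm_num)
  have h4 : Integrable (fun ω => X ω / (1 + 4 * (X ω) ^ 2 / ν)) P :=
    frac_integrable P hX hν 4 (by norm_num)
  have hd : ∀ x : ℝ, (0 < 1 + x ^ 2 / ν) ∧ (0 < 1 + 2 * x ^ 2 / ν) ∧ (0 < 1 + 4 * x ^ 2 / ν) :=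
    fun x => ⟨by positivity, by positivity, by positivity⟩
  have key : ∀ x : ℝ, x ^ 5 * (1 - 2 * x ^ 2 / ν) /
      ((1 + x ^ 2 / ν) * (1 + 2 * x ^ 2 / ν) * (1 + 4 * x ^ 2 / ν))
      = (ν ^ 2 / 4) * (4 * (x / (1 + x ^ 2 / ν)) - 4 * (x / (1 + 2 * x ^ 2 / ν))
          + x / (1 + 4 * x ^ 2 / ν) - x) := by
    intro x
    obtain ⟨ha, hb, hc⟩ := hd x
    field_simp
    ring
  have hcomb : Integrable (fun ω => (ν ^ 2 / 4) * (4 * (X ω / (1 + (X ω) ^ 2 / ν))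
      - 4 * (X ω / (1 + 2 * (X ω) ^ 2 / ν)) + X ω / (1 + 4 * (X ω) ^ 2 / ν) - X ω)) P :=
    (((h1.const_mul 4).sub (h2.const_mul 4)).add h4 |>.sub hX).const_mul _
  have hint : Integrable (fun ω => (X ω) ^ 5 * (1 - 2 * (X ω) ^ 2 / ν) /
      ((1 + (X ω) ^ 2 / ν) * (1 + 2 * (X ω) ^ 2 / ν) * (1 + 4 * (X ω) ^ 2 / ν))) P := by
    refine hcomb.congr (Filter.Eventually.of_forall fun ω => ?_)
    exact (key (X ω)).symm
  refine ⟨hint, ?_⟩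
  have hIeq : (∫ ω, (X ω) ^ 5 * (1 - 2 * (X ω) ^ 2 / ν) /
      ((1 + (X ω) ^ 2 / ν) * (1 + 2 * (X ω) ^ 2 / ν) * (1 + 4 * (X ω) ^ 2 / ν)) ∂P)
      = (ν ^ 2 / 4) * (4 * (∫ ω, X ω / (1 + (X ω) ^ 2 / ν) ∂P)
          - 4 * (∫ ω, X ω / (1 + 2 * (X ω) ^ 2 / ν) ∂P)
          + (∫ ω, X ω / (1 + 4 * (X ω) ^ 2 / ν) ∂P) - ∫ ω, X ω ∂P) := by
    rw [integral_congr_ae (Filter.Eventually.of_forall fun ω => key (X ω)),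
      integral_const_mul]
    congr 1
    have hAB : Integrable (fun ω => 4 * (X ω / (1 + (X ω) ^ 2 / ν))
        - 4 * (X ω / (1 + 2 * (X ω) ^ 2 / ν))) P := (h1.const_mul 4).sub (h2.const_mul 4)
    have hA : Integrable (fun ω => 4 * (X ω / (1 + (X ω) ^ 2 / ν))
        - 4 * (X ω / (1 + 2 * (X ω) ^ 2 / ν)) + X ω / (1 + 4 * (X ω) ^ 2 / ν)) P := hAB.add h4
    rw [integral_sub hA hX, integral_add hAB h4,
      integral_sub (h1.const_mul 4) (h2.const_mul 4),
      integral_const_mul, integral_const_mul]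
  rw [hIeq]
  have hν2 : ν ^ 2 ≠ 0 := by positivity
  generalize (∫ ω, X ω / (1 + (X ω) ^ 2 / ν) ∂P) = a
  generalize (∫ ω, X ω / (1 + 2 * (X ω) ^ 2 / ν) ∂P) = b
  generalize (∫ ω, X ω / (1 + 4 * (X ω) ^ 2 / ν) ∂P) = c
  generalize (∫ ω, X ω ∂P) = d
  field_simp
  ring
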